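/- Let n − √(n−1) < α ≤ n−2 and γ = 1 − (n−α−1)/√(n−1). Then ρ(P_{n−α+1}^{α−1}) ≤ (2√(n−1) + √((α−1)γ² + (n−α)(2−γ))) / (2+γ). -/

import Mathlib

open Matrix SimpleGraph Polynomial

attribute [local instance] Classical.propDecidable

/-- The spectral radius of a finite simple graph: the largest eigenvalue of its
adjacency matrix (as the supremum of its real spectrum). -/
noncomputable def specRad {V : Type*} [Fintype V] [DecidableEq V] (G : SimpleGraph V) : ℝ :=
  sSup (spectrum ℝ (G.adjMatrix ℝ))

/-- The pineapple `P_q^p`: a clique on `q` vertices together with an independent set of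
`p` vertices, each adjacent exactly to one fixed vertex of the clique. -/
def pineapple (q p : ℕ) : SimpleGraph (Fin q ⊕ Fin p) :=
  SimpleGraph.fromRel (fun a b =>
    match a, b with
    | Sum.inl _, Sum.inl _ => True
    | Sum.inl i, Sum.inr _ => i.val = 0
    | _, _ => False)

section AuxMatrix
variable {m n o : Type*}

lemma vmv_mul_vmv [Fintype n] (u : m → ℝ) (v w : n → ℝ) (x : o → ℝ) :
    vecMulVec u v * vecMulVec w x = (v ⬝ᵥ w) • vecMulVec u x := by
  ext i j
  simp only [Matrix.mul_apply, vecMulVec_apply, Matrix.smul_apply, dotProduct, smul_eq_mul,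
    Finset.sum_mul]
  exact Finset.sum_congr rfl fun k _ => by ring

lemma diag_mul_vmv [Fintype m] [DecidableEq m] (w u : m → ℝ) (v : n → ℝ) :
    diagonal w * vecMulVec u v = vecMulVec (w * u) v := by
  ext i j
  simp [Matrix.mul_apply, Matrix.diagonal_apply, vecMulVec_apply, ite_mul, Finset.sum_ite_eq,
    mul_assoc]

lemma vmv_mul_diag [Fintype n] [DecidableEq n] (u : m → ℝ) (v w : n → ℝ) :
    vecMulVec u v * diagonal w = vecMulVec u (v * w) := by
  ext i j
  simp [Matrix.mul_apply, Matrix.diagonal_apply, vecMulVec_apply, mul_ite, Finset.sum_ite_eq,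
    mul_assoc]

lemma zero_vmv (v : n → ℝ) : vecMulVec (0 : m → ℝ) v = 0 := by
  ext i j; simp [vecMulVec_apply]

lemma vmv_zero (u : m → ℝ) : vecMulVec u (0 : n → ℝ) = 0 := by
  ext i j; simp [vecMulVec_apply]

end AuxMatrix

section PineappleAlgebra
variable (q p : ℕ)

noncomputable def oV : (Fin (q+1) ⊕ Fin p) → ℝ := Sum.elim (fun _ => 1) (fun _ => 0)
noncomputable def zV : (Fin (q+1) ⊕ Fin p) → ℝ := Sum.elim (fun _ => 0) (fun _ => 1)
noncomputable def eV : (Fin (q+1) ⊕ Fin p) → ℝ := fun v => if v = Sum.inl 0 then 1 else 0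

lemma hoo : oV q p * oV q p = oV q p := by funext v; cases v <;> simp [oV]
lemma hoe : oV q p * eV q p = eV q p := by funext v; cases v <;> simp [oV, eV]
lemma hoz : oV q p * zV q p = 0 := by funext v; cases v <;> simp [oV, zV]
lemma heo : eV q p * oV q p = eV q p := by funext v; cases v <;> simp [oV, eV]
lemma hzo : zV q p * oV q p = 0 := by funext v; cases v <;> simp [oV, zV]
lemma hoo' : (fun v => oV q p v * oV q p v) = oV q p := by
  funext v; exact congrFun (hoo q p) v
lemma hdoo : oV q p ⬝ᵥ oV q p = (q : ℝ) + 1 := by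
  simp [dotProduct, Fintype.sum_sum_type, oV]
lemma hdoe : oV q p ⬝ᵥ eV q p = 1 := by
  simp [dotProduct, oV, eV, mul_ite, Finset.sum_ite_eq']
lemma hdeo : eV q p ⬝ᵥ oV q p = 1 := by
  simp [dotProduct, oV, eV, ite_mul, Finset.sum_ite_eq]
lemma hdee : eV q p ⬝ᵥ eV q p = 1 := by
  simp [dotProduct, eV, ite_mul, Finset.sum_ite_eq]
lemma hdoz : oV q p ⬝ᵥ zV q p = 0 := by
  simp [dotProduct, oV, zV, Fintype.sum_sum_type]
lemma hdzo : zV q p ⬝ᵥ oV q p = 0 := by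
  simp [dotProduct, oV, zV, Fintype.sum_sum_type]
lemma hdez : eV q p ⬝ᵥ zV q p = 0 := by
  simp [dotProduct, eV, zV, ite_mul, Finset.sum_ite_eq]
lemma hdze : zV q p ⬝ᵥ eV q p = 0 := by
  simp [dotProduct, eV, zV, mul_ite, Finset.sum_ite_eq']
lemma hdzz : zV q p ⬝ᵥ zV q p = (p : ℝ) := by
  simp [dotProduct, Fintype.sum_sum_type, zV]

lemma hA_decomp :
    (pineapple (q+1) p).adjMatrix ℝ
      = vecMulVec (oV q p) (oV q p) - diagonal (oV q p)
        + vecMulVec (eV q p) (zV q p) + vecMulVec (zV q p) (eV q p) := by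
  ext x y
  cases x with
  | inl i => cases y with
    | inl j =>
      simp only [SimpleGraph.adjMatrix_apply, pineapple, SimpleGraph.fromRel_adj,
        Matrix.add_apply, Matrix.sub_apply, vecMulVec_apply, Matrix.diagonal_apply,
        oV, zV, eV, Sum.elim_inl, Sum.inl.injEq]
      by_cases h : i = j <;> simp [h]
    | inr j =>
      simp only [SimpleGraph.adjMatrix_apply, pineapple, SimpleGraph.fromRel_adj,
        Matrix.add_apply, Matrix.sub_apply, vecMulVec_apply, Matrix.diagonal_apply,
        oV, zV, eV, Sum.elim_inl, Sum.elim_inr]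
      by_cases h : i = 0
      · simp [h]
      · have h' : ¬ (i.val = 0) := fun hv => h (Fin.ext hv)
        simp [h, h']
  | inr i => cases y with
    | inl j =>
      simp only [SimpleGraph.adjMatrix_apply, pineapple, SimpleGraph.fromRel_adj,
        Matrix.add_apply, Matrix.sub_apply, vecMulVec_apply, Matrix.diagonal_apply,
        oV, zV, eV, Sum.elim_inl, Sum.elim_inr]
      by_cases h : j = 0
      · simp [h]
      · have h' : ¬ (j.val = 0) := fun hv => h (Fin.ext hv)
        simp [h, h']
    | inr j =>
      simp only [SimpleGraph.adjMatrix_apply, pineapple, SimpleGraph.fromRel_adj,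
        Matrix.add_apply, Matrix.sub_apply, vecMulVec_apply, Matrix.diagonal_apply,
        oV, zV, eV, Sum.elim_inr]
      by_cases h : (Sum.inr i : Fin (q+1) ⊕ Fin p) = Sum.inr j <;> simp [h]

set_option maxHeartbeats 1000000 in
lemma hA2 : ((pineapple (q+1) p).adjMatrix ℝ)^2 =
  ((1:ℝ)) • (diagonal (oV q p))
  + ((p:ℝ)) • (vecMulVec (eV q p) (eV q p))
  + (((-1:ℝ))) • (vecMulVec (eV q p) (zV q p))
  + (((-1:ℝ)) + (q:ℝ)) • (vecMulVec (oV q p) (oV q p))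
  + ((1:ℝ)) • (vecMulVec (oV q p) (zV q p))
  + (((-1:ℝ))) • (vecMulVec (zV q p) (eV q p))
  + ((1:ℝ)) • (vecMulVec (zV q p) (oV q p))
  + ((1:ℝ)) • (vecMulVec (zV q p) (zV q p)) := by
  rw [pow_two, hA_decomp]
  simp only [Matrix.add_mul, Matrix.mul_add, Matrix.sub_mul, Matrix.mul_sub,
    smul_mul_assoc, mul_smul_comm, vmv_mul_vmv, diag_mul_vmv, vmv_mul_diag,
    Matrix.diagonal_mul_diagonal, hoo, hoe, hoz, heo, hzo, hoo',
    hdoo, hdoe, hdeo, hdee, hdoz, hdzo, hdez, hdze, hdzz,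
    zero_vmv, vmv_zero, zero_smul, smul_zero, one_smul]
  module

set_option maxHeartbeats 1000000 in
lemma hA3 : ((pineapple (q+1) p).adjMatrix ℝ)^3 =
  (((-1:ℝ))) • (diagonal (oV q p))
  + (((-2:ℝ))*(p:ℝ)) • (vecMulVec (eV q p) (eV q p))
  + ((p:ℝ)) • (vecMulVec (eV q p) (oV q p))
  + ((1:ℝ) + (p:ℝ)) • (vecMulVec (eV q p) (zV q p))
  + ((p:ℝ)) • (vecMulVec (oV q p) (eV q p))
  + ((1:ℝ) + ((-1:ℝ))*(q:ℝ) + (q:ℝ)^2) • (vecMulVec (oV q p) (oV q p))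
  + (((-1:ℝ)) + (q:ℝ)) • (vecMulVec (oV q p) (zV q p))
  + ((1:ℝ) + (p:ℝ)) • (vecMulVec (zV q p) (eV q p))
  + (((-1:ℝ)) + (q:ℝ)) • (vecMulVec (zV q p) (oV q p)) := by
  rw [pow_succ, hA2, hA_decomp]
  simp only [Matrix.add_mul, Matrix.mul_add, Matrix.sub_mul, Matrix.mul_sub,
    smul_mul_assoc, mul_smul_comm, vmv_mul_vmv, diag_mul_vmv, vmv_mul_diag,
    Matrix.diagonal_mul_diagonal, hoo, hoe, hoz, heo, hzo, hoo',
    hdoo, hdoe, hdeo, hdee, hdoz, hdzo, hdez, hdze, hdzz,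
    zero_vmv, vmv_zero, zero_smul, smul_zero, one_smul]
  module

set_option maxHeartbeats 1000000 in
lemma hA4 : ((pineapple (q+1) p).adjMatrix ℝ)^4 =
  ((1:ℝ)) • (diagonal (oV q p))
  + ((3:ℝ)*(p:ℝ) + (p:ℝ)^2) • (vecMulVec (eV q p) (eV q p))
  + (((-2:ℝ))*(p:ℝ) + (q:ℝ)*(p:ℝ)) • (vecMulVec (eV q p) (oV q p))
  + (((-1:ℝ)) + ((-1:ℝ))*(p:ℝ)) • (vecMulVec (eV q p) (zV q p))
  + (((-2:ℝ))*(p:ℝ) + (q:ℝ)*(p:ℝ)) • (vecMulVec (oV q p) (eV q p))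
  + (((-1:ℝ)) + (p:ℝ) + (q:ℝ) + ((-1:ℝ))*(q:ℝ)^2 + (q:ℝ)^3) • (vecMulVec (oV q p) (oV q p))
  + ((1:ℝ) + (p:ℝ) + ((-1:ℝ))*(q:ℝ) + (q:ℝ)^2) • (vecMulVec (oV q p) (zV q p))
  + (((-1:ℝ)) + ((-1:ℝ))*(p:ℝ)) • (vecMulVec (zV q p) (eV q p))
  + ((1:ℝ) + (p:ℝ) + ((-1:ℝ))*(q:ℝ) + (q:ℝ)^2) • (vecMulVec (zV q p) (oV q p))
  + ((p:ℝ) + (q:ℝ)) • (vecMulVec (zV q p) (zV q p)) := by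
  rw [pow_succ, hA3, hA_decomp]
  simp only [Matrix.add_mul, Matrix.mul_add, Matrix.sub_mul, Matrix.mul_sub,
    smul_mul_assoc, mul_smul_comm, vmv_mul_vmv, diag_mul_vmv, vmv_mul_diag,
    Matrix.diagonal_mul_diagonal, hoo, hoe, hoz, heo, hzo, hoo',
    hdoo, hdoe, hdeo, hdee, hdoz, hdzo, hdez, hdze, hdzz,
    zero_vmv, vmv_zero, zero_smul, smul_zero, one_smul]
  module

set_option maxHeartbeats 1000000 in
lemma hA5 : ((pineapple (q+1) p).adjMatrix ℝ)^5 =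
  (((-1:ℝ))) • (diagonal (oV q p))
  + (((-4:ℝ))*(p:ℝ) + ((-2:ℝ))*(p:ℝ)^2) • (vecMulVec (eV q p) (eV q p))
  + ((3:ℝ)*(p:ℝ) + (p:ℝ)^2 + ((-2:ℝ))*(q:ℝ)*(p:ℝ) + (q:ℝ)^2*(p:ℝ)) • (vecMulVec (eV q p) (oV q p))
  + ((1:ℝ) + (p:ℝ) + (p:ℝ)^2 + (q:ℝ)*(p:ℝ)) • (vecMulVec (eV q p) (zV q p))
  + ((3:ℝ)*(p:ℝ) + (p:ℝ)^2 + ((-2:ℝ))*(q:ℝ)*(p:ℝ) + (q:ℝ)^2*(p:ℝ)) • (vecMulVec (oV q p) (eV q p))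
  + ((1:ℝ) + ((-2:ℝ))*(p:ℝ) + ((-1:ℝ))*(q:ℝ) + (2:ℝ)*(q:ℝ)*(p:ℝ) + (q:ℝ)^2 + ((-1:ℝ))*(q:ℝ)^3 + (q:ℝ)^4) • (vecMulVec (oV q p) (oV q p))
  + (((-1:ℝ)) + ((-1:ℝ))*(p:ℝ) + (q:ℝ) + (q:ℝ)*(p:ℝ) + ((-1:ℝ))*(q:ℝ)^2 + (q:ℝ)^3) • (vecMulVec (oV q p) (zV q p))
  + ((1:ℝ) + (p:ℝ) + (p:ℝ)^2 + (q:ℝ)*(p:ℝ)) • (vecMulVec (zV q p) (eV q p))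
  + (((-1:ℝ)) + ((-1:ℝ))*(p:ℝ) + (q:ℝ) + (q:ℝ)*(p:ℝ) + ((-1:ℝ))*(q:ℝ)^2 + (q:ℝ)^3) • (vecMulVec (zV q p) (oV q p))
  + (((-1:ℝ))*(q:ℝ) + (q:ℝ)^2) • (vecMulVec (zV q p) (zV q p)) := by
  rw [pow_succ, hA4, hA_decomp]
  simp only [Matrix.add_mul, Matrix.mul_add, Matrix.sub_mul, Matrix.mul_sub,
    smul_mul_assoc, mul_smul_comm, vmv_mul_vmv, diag_mul_vmv, vmv_mul_diag,
    Matrix.diagonal_mul_diagonal, hoo, hoe, hoz, heo, hzo, hoo',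
    hdoo, hdoe, hdeo, hdee, hdoz, hdzo, hdez, hdze, hdzz,
    zero_vmv, vmv_zero, zero_smul, smul_zero, one_smul]
  module

set_option maxHeartbeats 1000000 in
lemma hKey : ((pineapple (q+1) p).adjMatrix ℝ)^5 =
    ((q:ℝ)-2) • ((pineapple (q+1) p).adjMatrix ℝ)^4
    + (2*(q:ℝ)+(p:ℝ)-1) • ((pineapple (q+1) p).adjMatrix ℝ)^3
    - ((q:ℝ)*(p:ℝ)-2*(p:ℝ)-(q:ℝ)) • ((pineapple (q+1) p).adjMatrix ℝ)^2
    - ((p:ℝ)*((q:ℝ)-1)) • ((pineapple (q+1) p).adjMatrix ℝ) := by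
  rw [hA5, hA4, hA3, hA2, hA_decomp]
  module

end PineappleAlgebra

/-- If a cubic is nonnegative together with its first two "Taylor coefficients" at `t`,
then every real root is at most `t`. -/
lemma cubic_root_le {B C D t x : ℝ} (h0 : 0 ≤ t^3 - B*t^2 - C*t + D)
    (h1 : 0 ≤ 3*t^2 - 2*B*t - C) (h2 : 0 ≤ 3*t - B)
    (hx : x^3 - B*x^2 - C*x + D = 0) : x ≤ t := by
  by_contra h
  push_neg at h
  have hs : 0 < x - t := sub_pos.mpr h
  nlinarith [mul_nonneg h1 hs.le, mul_nonneg h2 (sq_nonneg (x - t)), pow_pos hs 3]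

set_option maxHeartbeats 2000000 in
theorem stmt17 (n α : ℕ)
    (hα₁ : (n : ℝ) - Real.sqrt ((n : ℝ) - 1) < (α : ℝ)) (hα₂ : α ≤ n - 2)
    (γ : ℝ) (hγ : γ = 1 - ((n : ℝ) - α - 1) / Real.sqrt ((n : ℝ) - 1)) :
    specRad (pineapple (n - α + 1) (α - 1)) ≤
      (2 * Real.sqrt ((n : ℝ) - 1) +
        Real.sqrt (((α : ℝ) - 1) * γ ^ 2 + ((n : ℝ) - α) * (2 - γ))) / (2 + γ) := by
  -- basic numeric facts
  have hn2 : 2 ≤ n := by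
    by_contra h
    push_neg at h
    interval_cases n <;>
    · have hα0 : α = 0 := by omega
      subst hα0
      norm_num [Real.sqrt_eq_zero_of_nonpos] at hα₁
  have hαn : α ≤ n := by omega
  have hα2n : α + 2 ≤ n := by omega
  set s : ℝ := Real.sqrt ((n : ℝ) - 1) with hs_def
  have hs_nonneg : 0 ≤ s := Real.sqrt_nonneg _
  have hs_sq : s ^ 2 = (n : ℝ) - 1 := Real.sq_sqrt (by
    have : (2:ℝ) ≤ (n:ℝ) := by exact_mod_cast hn2
    linarith)
  set d : ℝ := (n : ℝ) - (α : ℝ) with hd_def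
  have hd2 : (2:ℝ) ≤ d := by
    have : ((α:ℝ) + 2) ≤ (n:ℝ) := by exact_mod_cast hα2n
    simp only [hd_def]; linarith
  have hds : d < s := by simp only [hd_def]; linarith
  have hs2 : (2:ℝ) < s := lt_of_le_of_lt hd2 hds
  have hα1 : 1 ≤ α := by
    by_contra h
    push_neg at h
    interval_cases α
    · simp only [Nat.cast_zero, sub_zero] at hd_def
      nlinarith [hs_sq, hds, hs2]
  -- the graph parameters
  have hq_cast : ((n - α : ℕ) : ℝ) = d := by
    simp only [hd_def]; push_cast [hαn]; ring
  have hp_cast : ((α - 1 : ℕ) : ℝ) = (α : ℝ) - 1 := by push_cast [hα1]; ring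
  have hpin : n - α + 1 = (n - α) + 1 := rfl
  -- quantities for the bound
  set u : ℝ := Real.sqrt ((s^2-d)*(s-(d-1))^2 + d*s*(s+(d-1))) with hu_def
  have hN_nonneg : 0 ≤ (s^2-d)*(s-(d-1))^2 + d*s*(s+(d-1)) := by
    have h1 : 0 ≤ s^2 - d := by nlinarith
    have h2 : 0 ≤ d*s*(s+(d-1)) := by
      apply mul_nonneg (mul_nonneg (by linarith) hs_nonneg) (by linarith)
    nlinarith [sq_nonneg (s-(d-1))]
  have hu_sq : u^2 = (s^2-d)*(s-(d-1))^2 + d*s*(s+(d-1)) := Real.sq_sqrt hN_nonneg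
  have hu_nonneg : 0 ≤ u := Real.sqrt_nonneg _
  have hm_pos : 0 < 3*s - (d-1) := by linarith
  set t : ℝ := (2*s^2 + u)/(3*s - (d-1)) with ht_def
  -- the right hand side equals t
  have hγs : γ = (s - (d-1))/s := by
    rw [hγ]
    have : (n:ℝ) - (α:ℝ) - 1 = d - 1 := by simp only [hd_def]
    rw [this]
    field_simp
  have hrhs : (2 * s + Real.sqrt (((α : ℝ) - 1) * γ ^ 2 + ((n : ℝ) - α) * (2 - γ))) / (2 + γ)
      = t := by
    have hαs : (α : ℝ) - 1 = s^2 - d := by simp only [hd_def]; linarith [hs_sq]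
    have harg : ((α : ℝ) - 1) * γ ^ 2 + ((n : ℝ) - α) * (2 - γ)
        = ((s^2-d)*(s-(d-1))^2 + d*s*(s+(d-1)))/s^2 := by
      rw [hαs, hγs]
      have hs0 : s ≠ 0 := by linarith
      have hnd : (n:ℝ) - (α:ℝ) = d := by simp only [hd_def]
      rw [hnd]
      field_simp
      ring
    rw [harg, Real.sqrt_div hN_nonneg, Real.sqrt_sq hs_nonneg]
    have h2γ : 2 + γ = (3*s - (d-1))/s := by
      rw [hγs]; field_simp; ring
    rw [h2γ, ht_def, ← hu_def]
    have hs0 : s ≠ 0 := by linarith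
    field_simp
  rw [hrhs]
  -- t is at least s
  have hNs : (s*(s-(d-1)))^2 ≤ (s^2-d)*(s-(d-1))^2 + d*s*(s+(d-1)) := by
    have : (s^2-d)*(s-(d-1))^2 + d*s*(s+(d-1))
        = (s*(s-(d-1)))^2 + d*(d-1)*(3*s-(d-1)) := by ring
    rw [this]
    have h4 : 0 ≤ d*(d-1)*(3*s-(d-1)) :=
      mul_nonneg (mul_nonneg (by linarith) (by linarith)) hm_pos.le
    linarith
  have hu_ge : s*(s-(d-1)) ≤ u := by
    have h1 := Real.sqrt_le_sqrt hNs
    rwa [Real.sqrt_sq (by nlinarith : (0:ℝ) ≤ s*(s-(d-1))), ← hu_def] at h1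
  have hts : s ≤ t := by
    rw [ht_def, le_div_iff₀ hm_pos]
    nlinarith [hu_ge]
  have ht0 : 0 ≤ t := by linarith
  -- cubic coefficient inequalities at t
  have hC2 : 0 ≤ 3*t - (d-1) := by linarith
  have hC1 : 0 ≤ 3*t^2 - 2*(d-1)*t - s^2 := by
    nlinarith [mul_nonneg (by linarith : (0:ℝ) ≤ 3*t+s) (sub_nonneg.mpr hts),
      mul_nonneg ht0 (by linarith : (0:ℝ) ≤ s - (d-1))]
  have hC0 : 0 ≤ t^3 - (d-1)*t^2 - s^2*t + (s^2-d)*(d-1) := by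
    set A1v : ℝ := 4*s^2*(s-(d-1))^2 + (d-1)*d*(3*s-(d-1)) with hA1v_def
    set A0v : ℝ := 3*s*d - 9*s*d^2 + 9*s*d^3 - 3*s*d^4 + 12*s^2*d - 24*s^2*d^2 + 12*s^2*d^3
      - 4*s^3 + 21*s^3*d - 21*s^3*d^2 + 4*s^3*d^3 - 12*s^4 + 24*s^4*d - 12*s^4*d^2
      - 12*s^5 + 12*s^5*d - 4*s^6 with hA0v_def
    have hA1_nonneg : 0 ≤ A1v := by
      rw [hA1v_def]
      have h1 : 0 ≤ 4*s^2*(s-(d-1))^2 := by positivity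
      have h2 : 0 ≤ (d-1)*d*(3*s-(d-1)) := by
        apply mul_nonneg (mul_nonneg (by linarith) (by linarith)) (by linarith)
      linarith
    have hcube : 0 ≤ (d-1)^3*d^3*(3*s-(d-1))^3 := by
      apply mul_nonneg (mul_nonneg (pow_nonneg (by linarith) 3) (pow_nonneg (by linarith) 3))
        (pow_nonneg hm_pos.le 3)
    have hsq : (A1v*u)^2 - A0v^2 = (d-1)^3*d^3*(3*s-(d-1))^3 := by
      rw [mul_pow, hu_sq, hA1v_def, hA0v_def]
      ring
    have hA0u : -A0v ≤ A1v*u := by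
      have hX : 0 ≤ A1v*u := mul_nonneg hA1_nonneg hu_nonneg
      have h2 : A0v^2 ≤ (A1v*u)^2 := by linarith
      calc -A0v ≤ |A0v| := neg_le_abs _
        _ = Real.sqrt (A0v^2) := (Real.sqrt_sq_eq_abs _).symm
        _ ≤ Real.sqrt ((A1v*u)^2) := Real.sqrt_le_sqrt h2
        _ = |A1v*u| := Real.sqrt_sq_eq_abs _
        _ = A1v*u := abs_of_nonneg hX
    have hmt : (3*s-(d-1))*t = 2*s^2 + u := by
      rw [ht_def]
      field_simp
    have key : (3*s-(d-1))^3 * (t^3 - (d-1)*t^2 - s^2*t + (s^2-d)*(d-1)) = A0v + A1v*u := by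
      have h1 : ((3*s-(d-1))*t)^3 = (2*s^2+u)^3 := by rw [hmt]
      have h2 : ((3*s-(d-1))*t)^2 = (2*s^2+u)^2 := by rw [hmt]
      rw [hA0v_def, hA1v_def]
      linear_combination h1 - ((d-1)*(3*s-(d-1)))*h2 - (s^2*(3*s-(d-1))^2)*hmt
        + (u + 6*s^2 - (d-1)*(3*s-(d-1)))*hu_sq
    have h3 : (3*s-(d-1))^3 * 0 ≤ (3*s-(d-1))^3 * (t^3 - (d-1)*t^2 - s^2*t + (s^2-d)*(d-1)) := by
      rw [mul_zero, key]; linarith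
    exact le_of_mul_le_mul_left h3 (pow_pos hm_pos 3)
  -- spectral step
  show sSup (spectrum ℝ ((pineapple (n - α + 1) (α - 1)).adjMatrix ℝ)) ≤ t
  apply Real.sSup_le _ ht0
  intro x hx
  set q : ℕ := n - α with hqn
  set p : ℕ := α - 1 with hpn
  set A : Matrix (Fin (q+1) ⊕ Fin p) (Fin (q+1) ⊕ Fin p) ℝ := (pineapple (q+1) p).adjMatrix ℝ
    with hA_def
  set pol : ℝ[X] := X^5 - C ((q:ℝ)-2) * X^4 - C (2*(q:ℝ)+(p:ℝ)-1) * X^3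
    + C ((q:ℝ)*(p:ℝ)-2*(p:ℝ)-(q:ℝ)) * X^2 + C ((p:ℝ)*((q:ℝ)-1)) * X with hpol_def
  have haev : aeval A pol = 0 := by
    have hstep : aeval A pol = A^5 - ((q:ℝ)-2) • A^4 - (2*(q:ℝ)+(p:ℝ)-1) • A^3
        + ((q:ℝ)*(p:ℝ)-2*(p:ℝ)-(q:ℝ)) • A^2 + ((p:ℝ)*((q:ℝ)-1)) • A := by
      rw [hpol_def]
      simp only [map_add, map_sub, _root_.map_mul, map_pow, aeval_X, aeval_C,
        Algebra.algebraMap_eq_smul_one, smul_mul_assoc, one_mul, Matrix.sub_mul,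
        Matrix.add_mul]
      module
    rw [hstep, hA_def, hKey q p]
    abel
  have hmem : eval x pol ∈ spectrum ℝ (aeval A pol) :=
    spectrum.subset_polynomial_aeval A pol ⟨x, hx, rfl⟩
  rw [haev, spectrum.zero_eq] at hmem
  have hev : eval x pol = 0 := Set.mem_singleton_iff.mp hmem
  rw [hpol_def] at hev
  simp only [eval_add, eval_sub, eval_mul, eval_pow, eval_X, eval_C] at hev
  rw [hq_cast, hp_cast] at hev
  have hrel : s^2 = d + ((α:ℝ) - 1) := by simp only [hd_def]; linarith [hs_sq]
  have hfac : x * (x+1) * (x^3 - (d-1)*x^2 - s^2*x + (s^2-d)*(d-1)) = 0 := by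
    linear_combination hev + (-x^3 + (d-2)*x^2 + (d-1)*x) * hrel
  rcases mul_eq_zero.mp hfac with h01 | hcub
  · rcases mul_eq_zero.mp h01 with h0 | h1
    · rw [h0]; exact ht0
    · have : x = -1 := by linarith [eq_neg_of_add_eq_zero_left h1]
      rw [this]; linarith
  · exact cubic_root_le hC0 hC1 hC2 hcub
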